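/- Let H be a real inner product space, K ⊆ H a subset, j : H → ℝ a function, L : H → ℝ a linear map, and Y₁ > Y₂ real numbers. Suppose u₁, u₂ ∈ K satisfy, for i = 1, 2 and for all v ∈ K, the variational inequality ⟨uᵢ, v − uᵢ⟩ + Yᵢ·j(v) − Yᵢ·j(uᵢ) ≥ L(v − uᵢ). Then ‖u₁ − u₂‖² ≤ (Y₁ − Y₂)·(j(u₂) − j(u₁)). (This is the summed variational-inequality estimate used to prove the convergence rate of the Bingham velocities ω_Y as Y → Y_c.) -/

import Mathlib

open scoped RealInnerProductSpace

/-- summed variational-inequality estimate. -/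
theorem stmt_1 {H : Type*} [NormedAddCommGroup H] [InnerProductSpace ℝ H]
    (K : Set H) (j : H → ℝ) (L : H →ₗ[ℝ] ℝ) (Y₁ Y₂ : ℝ) (hY : Y₁ > Y₂)
    (u₁ u₂ : H) (hu₁ : u₁ ∈ K) (hu₂ : u₂ ∈ K)
    (hVI₁ : ∀ v ∈ K, ⟪u₁, v - u₁⟫ + Y₁ * j v - Y₁ * j u₁ ≥ L (v - u₁))
    (hVI₂ : ∀ v ∈ K, ⟪u₂, v - u₂⟫ + Y₂ * j v - Y₂ * j u₂ ≥ L (v - u₂)) :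
    ‖u₁ - u₂‖ ^ 2 ≤ (Y₁ - Y₂) * (j u₂ - j u₁) := by
  have h1 := hVI₁ u₂ hu₂
  have h2 := hVI₂ u₁ hu₁
  have key : ⟪u₁, u₂ - u₁⟫ + ⟪u₂, u₁ - u₂⟫ + (Y₁ - Y₂) * (j u₂ - j u₁) ≥ 0 := by
    have : L (u₂ - u₁) + L (u₁ - u₂) = 0 := by
      rw [← L.map_add]; simp
    nlinarith [h1, h2]
  have hinner : ⟪u₁, u₂ - u₁⟫ + ⟪u₂, u₁ - u₂⟫ = -‖u₁ - u₂‖ ^ 2 := by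
    have : ⟪u₁ - u₂, u₁ - u₂⟫ = ‖u₁ - u₂‖ ^ 2 := real_inner_self_eq_norm_sq _
    rw [← this]
    simp [inner_sub_sub_self, inner_sub_left, inner_sub_right, real_inner_comm u₁ u₂]
    rw [norm_sub_sq_real]; ring
  linarith [key, hinner.symm ▸ key]
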